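/- For every i ≥ 1 and every k ∈ ℤ₊, the second difference of the Stein solution g_k for the indicator function of {k} satisfies: Δ²g_k(i) ≥ 0 if k ≤ i−1 or k = i+1, and Δ²g_k(i) ≤ 0 if k ≥ i+2. -/

import Mathlib

private def aa (β : ℝ) (n : ℕ) : ℝ := β * (n:ℝ) + (n:ℝ) * ((n:ℝ) - 1)

private lemma aa_pos {β : ℝ} (hβ : 0 < β) {n : ℕ} (hn : 1 ≤ n) : 0 < aa β n := by
  have h : (1:ℝ) ≤ n := by exact_mod_cast hn
  unfold aa; nlinarith

private lemma aa_nonneg {β : ℝ} (hβ : 0 < β) (n : ℕ) : 0 ≤ aa β n := by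
  rcases Nat.eq_zero_or_pos n with h | h
  · subst h; simp [aa]
  · exact (aa_pos hβ h).le

private lemma aa_mono {β : ℝ} (hβ : 0 < β) (n : ℕ) : aa β n ≤ aa β (n+1) := by
  have h : (0:ℝ) ≤ n := Nat.cast_nonneg n
  unfold aa; push_cast; nlinarith

private lemma aa_second (β : ℝ) (n : ℕ) : aa β (n+2) + aa β n - 2 * aa β (n+1) = 2 := by
  unfold aa; push_cast; ring

private lemma triple_prod {f0 f1 f2 g0 g1 g2 : ℝ}
    (hf0 : 0 < f0) (hf1 : f0 ≤ f1) (hf2 : f1 - f0 ≤ f2 - f1)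
    (hg0 : 0 < g0) (hg1 : g0 ≤ g1) (hg2 : g1 - g0 ≤ g2 - g1) :
    0 < f0 * g0 ∧ f0 * g0 ≤ f1 * g1 ∧ f1 * g1 - f0 * g0 ≤ f2 * g2 - f1 * g1 := by
  refine ⟨mul_pos hf0 hg0, ?_, ?_⟩
  · nlinarith
  · nlinarith [mul_nonneg (le_trans hf0.le hf1) (by linarith : (0:ℝ) ≤ (g2 - g1) - (g1 - g0)),
      mul_nonneg (le_trans hg0.le hg1) (by linarith : (0:ℝ) ≤ (f2 - f1) - (f1 - f0)),
      mul_nonneg (by linarith : (0:ℝ) ≤ f2 - f1) (by linarith : (0:ℝ) ≤ g2 - g1),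
      mul_nonneg (by linarith : (0:ℝ) ≤ f1 - f0) (by linarith : (0:ℝ) ≤ g1 - g0)]

private noncomputable def PP (α β : ℝ) (t n : ℕ) : ℝ := ∏ s ∈ Finset.range t, (aa β (n - s) / α)

private lemma PP_succ_bot (α β : ℝ) (t m : ℕ) :
    PP α β (t+1) m = PP α β t m * (aa β (m - t) / α) := Finset.prod_range_succ _ _

private lemma PP_succ_top (α β : ℝ) (t n : ℕ) :
    PP α β (t+1) (n+1) = (aa β (n+1) / α) * PP α β t n := by
  unfold PP
  rw [Finset.prod_range_succ']
  simp only [Nat.succ_sub_succ_eq_sub, Nat.sub_zero]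
  ring

private lemma PP_conv {α β : ℝ} (hα : 0 < α) (hβ : 0 < β) :
    ∀ t n : ℕ, t ≤ n → 0 < PP α β t n ∧ PP α β t n ≤ PP α β t (n+1) ∧
      PP α β t (n+1) - PP α β t n ≤ PP α β t (n+2) - PP α β t (n+1) := by
  intro t
  induction t with
  | zero => intro n _; simp [PP]
  | succ t ih =>
    intro n htn
    have ht : t ≤ n := le_trans (Nat.le_succ t) htn
    obtain ⟨h1, h2, h3⟩ := ih n ht
    have e1 : n + 1 - t = (n - t) + 1 := by omega
    have e2 : n + 2 - t = (n - t) + 2 := by omega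
    have hm1 : 1 ≤ n - t := by omega
    rw [PP_succ_bot, PP_succ_bot, PP_succ_bot, e1, e2]
    have hb0 : 0 < aa β (n-t) / α := div_pos (aa_pos hβ hm1) hα
    have hb1 : aa β (n-t) / α ≤ aa β (n-t+1) / α :=
      (div_le_div_iff_of_pos_right hα).mpr (aa_mono hβ _)
    have hb2 : aa β (n-t+1) / α - aa β (n-t) / α ≤ aa β (n-t+2) / α - aa β (n-t+1) / α := by
      rw [div_sub_div_same, div_sub_div_same]
      exact (div_le_div_iff_of_pos_right hα).mpr (by linarith [aa_second β (n-t)])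
    exact triple_prod h1 h2 h3 hb0 hb1 hb2

private lemma inv_conv {h0 h1 h2 : ℝ} (p0 : 0 < h0) (p1 : 0 < h1) (p2 : 0 < h2)
    (hlc : h0 * h2 ≤ h1 * h1) : 2 / h1 ≤ 1 / h0 + 1 / h2 := by
  rw [div_add_div _ _ (ne_of_gt p0) (ne_of_gt p2), div_le_div_iff₀ p1 (mul_pos p0 p2)]
  have key : 0 ≤ ((h2 + h0) * h1 - 2 * (h0 * h2)) * ((h2 + h0) * h1 + 2 * (h0 * h2)) := by
    nlinarith [mul_nonneg (mul_nonneg p0.le p2.le) (sq_nonneg (h0 - h2)), sq_nonneg (h0 + h2),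
      mul_pos p0 p2]
  have pos2 : 0 < (h2 + h0) * h1 + 2 * (h0 * h2) := by positivity
  nlinarith [key, pos2]

private noncomputable def SS (π : ℕ → ℝ) (n : ℕ) : ℝ := (∑ m ∈ Finset.range (n+1), π m) / π n

private lemma SS_nonneg {π : ℕ → ℝ} (hpos : ∀ n, 0 < π n) (n : ℕ) : 0 ≤ SS π n :=
  div_nonneg (Finset.sum_nonneg fun m _ => (hpos m).le) (hpos n).le

private lemma SS_rec {α β : ℝ} {π : ℕ → ℝ} (hα : 0 < α) (hpos : ∀ n, 0 < π n)
    (hrec : ∀ n, π (n+1) * aa β (n+1) = α * π n) (n : ℕ) :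
    SS π (n+1) = (aa β (n+1) / α) * SS π n + 1 := by
  have hs : ∑ m ∈ Finset.range (n+2), π m = ∑ m ∈ Finset.range (n+1), π m + π (n+1) :=
    Finset.sum_range_succ _ _
  have h1 : π n ≠ 0 := (hpos n).ne'
  have h2 : π (n+1) ≠ 0 := (hpos (n+1)).ne'
  have h3 : α ≠ 0 := hα.ne'
  unfold SS
  rw [hs]
  field_simp
  linear_combination (-(∑ m ∈ Finset.range (n+1), π m)) * hrec n

private lemma SS_eq_sum {α β : ℝ} {π : ℕ → ℝ} (hα : 0 < α) (hpos : ∀ n, 0 < π n)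
    (hrec : ∀ n, π (n+1) * aa β (n+1) = α * π n) :
    ∀ n, SS π n = ∑ t ∈ Finset.range (n+1), PP α β t n := by
  intro n
  induction n with
  | zero => simp [SS, PP, div_self (hpos 0).ne']
  | succ n ih =>
    rw [SS_rec hα hpos hrec n, ih]
    conv_rhs => rw [Finset.sum_range_succ']
    have e : ∀ t, PP α β (t+1) (n+1) = (aa β (n+1) / α) * PP α β t n := by
      intro t
      unfold PP
      rw [Finset.prod_range_succ']
      simp only [Nat.succ_sub_succ_eq_sub, Nat.sub_zero]
      ring
    simp only [e]
    rw [← Finset.mul_sum]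
    simp [PP]

private lemma aa_ge2 {β : ℝ} (hβ : 0 < β) (n : ℕ) : 2 * aa β 1 ≤ aa β (n+2) := by
  have h : (0:ℝ) ≤ n := Nat.cast_nonneg n
  unfold aa; push_cast; nlinarith

private lemma SS_mono {α β : ℝ} {π : ℕ → ℝ} (hα : 0 < α) (hβ : 0 < β) (hpos : ∀ n, 0 < π n)
    (hrec : ∀ n, π (n+1) * aa β (n+1) = α * π n) :
    ∀ n, SS π n ≤ SS π (n+1) := by
  intro n
  induction n with
  | zero =>
    have h0 : SS π 0 = 1 := by simp [SS, div_self (hpos 0).ne']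
    rw [SS_rec hα hpos hrec 0, h0]
    have : 0 ≤ aa β 1 / α := div_nonneg (aa_nonneg hβ 1) hα.le
    linarith
  | succ n ih =>
    rw [SS_rec hα hpos hrec n, SS_rec hα hpos hrec (n+1)]
    have h1 : 0 ≤ aa β (n+1) / α := div_nonneg (aa_nonneg hβ _) hα.le
    have h2 : aa β (n+1) / α ≤ aa β (n+2) / α := (div_le_div_iff_of_pos_right hα).mpr (aa_mono hβ _)
    have h3 : 0 ≤ SS π n := SS_nonneg hpos n
    have h4 : 0 ≤ SS π (n+1) := SS_nonneg hpos (n+1)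
    nlinarith

private lemma SS_conv {α β : ℝ} {π : ℕ → ℝ} (hα : 0 < α) (hβ : 0 < β) (hpos : ∀ n, 0 < π n)
    (hrec : ∀ n, π (n+1) * aa β (n+1) = α * π n) (n : ℕ) :
    2 * SS π (n+1) ≤ SS π n + SS π (n+2) := by
  have hc := PP_conv hα hβ
  rw [SS_eq_sum hα hpos hrec n, SS_eq_sum hα hpos hrec (n+1), SS_eq_sum hα hpos hrec (n+2)]
  have E2 : ∑ t ∈ Finset.range (n+3), PP α β t (n+2)
      = (∑ t ∈ Finset.range (n+1), PP α β t (n+2)) + PP α β (n+1) (n+2) + PP α β (n+2) (n+2) := by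
    rw [Finset.sum_range_succ, Finset.sum_range_succ]
  have E1 : ∑ t ∈ Finset.range (n+2), PP α β t (n+1)
      = (∑ t ∈ Finset.range (n+1), PP α β t (n+1)) + PP α β (n+1) (n+1) :=
    Finset.sum_range_succ _ _
  have hts : ∑ t ∈ Finset.range (n+1), (2 * PP α β t (n+1))
      ≤ ∑ t ∈ Finset.range (n+1), (PP α β t n + PP α β t (n+2)) := by
    apply Finset.sum_le_sum
    intro t ht
    have h := hc t n (Nat.lt_succ_iff.mp (Finset.mem_range.mp ht))
    linarith [h.2.2]
  rw [Finset.sum_add_distrib, ← Finset.mul_sum] at hts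
  -- boundary
  have hb1 : PP α β (n+1) (n+1) = PP α β n (n+1) * (aa β 1 / α) := by
    have := PP_succ_bot α β n (n+1)
    rwa [show n+1-n = 1 by omega] at this
  have hb2 : PP α β (n+1) (n+2) = (aa β (n+2) / α) * PP α β n (n+1) := PP_succ_top α β n (n+1)
  have hb3 : PP α β (n+2) (n+2) = PP α β (n+1) (n+2) * (aa β 1 / α) := by
    have := PP_succ_bot α β (n+1) (n+2)
    rwa [show n+2-(n+1) = 1 by omega] at this
  have hQ : 0 < PP α β n (n+1) := lt_of_lt_of_le (hc n n le_rfl).1 (hc n n le_rfl).2.1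
  have hbb1 : 0 ≤ aa β 1 / α := div_nonneg (aa_nonneg hβ 1) hα.le
  have hbb2 : 2 * (aa β 1 / α) ≤ aa β (n+2) / α := by
    rw [show 2 * (aa β 1 / α) = 2 * aa β 1 / α by ring]
    exact (div_le_div_iff_of_pos_right hα).mpr (aa_ge2 hβ n)
  have hbdy : 2 * PP α β (n+1) (n+1) ≤ PP α β (n+1) (n+2) + PP α β (n+2) (n+2) := by
    rw [hb1, hb2, hb3, hb2]
    nlinarith [mul_nonneg (mul_nonneg hQ.le hbb1) (by linarith : 0 ≤ aa β (n+2)/α - 2*(aa β 1/α)),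
      mul_nonneg hQ.le (by linarith : 0 ≤ aa β (n+2)/α - 2*(aa β 1/α)),
      mul_nonneg (mul_nonneg hQ.le hbb1) hbb1]
  linarith [hts, E1, E2]

private lemma aa_logconc {β : ℝ} (hβ : 0 < β) (j : ℕ) :
    aa β j * aa β (j+2) ≤ aa β (j+1) * aa β (j+1) := by
  have h : (0:ℝ) ≤ j := Nat.cast_nonneg j
  unfold aa; push_cast; nlinarith [sq_nonneg ((j:ℝ) + β), sq_nonneg ((j:ℝ)+1)]

private noncomputable def hh (β : ℝ) (m n : ℕ) : ℝ := ∏ s ∈ Finset.range (m+1), aa β (n+1+s)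
private noncomputable def vv (α : ℝ) (π : ℕ → ℝ) (n : ℕ) : ℝ :=
  (1 - ∑ m ∈ Finset.range (n+1), π m) / (α * π n)

private lemma hh_pos {β : ℝ} (hβ : 0 < β) (m n : ℕ) : 0 < hh β m n :=
  Finset.prod_pos fun s _ => aa_pos hβ (by omega)

private lemma hh_logconc {β : ℝ} (hβ : 0 < β) (m n : ℕ) :
    hh β m n * hh β m (n+2) ≤ hh β m (n+1) * hh β m (n+1) := by
  unfold hh
  rw [← Finset.prod_mul_distrib, ← Finset.prod_mul_distrib]
  apply Finset.prod_le_prod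
  · intro s _; exact mul_nonneg (aa_nonneg hβ _) (aa_nonneg hβ _)
  · intro s _
    have e1 : n+2+1+s = (n+1+s)+2 := by omega
    have e2 : n+1+1+s = (n+1+s)+1 := by omega
    rw [e1, e2]
    exact aa_logconc hβ (n+1+s)

private lemma pi_hh {α β : ℝ} {π : ℕ → ℝ}
    (hrec : ∀ n, π (n+1) * aa β (n+1) = α * π n) :
    ∀ m n : ℕ, π (n+1+m) * hh β m n = π n * α^(m+1) := by
  intro m
  induction m with
  | zero =>
    intro n
    have := hrec n
    simp only [hh, zero_add, Nat.add_zero, Finset.prod_range_one]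
    rw [pow_one]
    linear_combination this
  | succ m ih =>
    intro n
    have e : hh β (m+1) n = hh β m n * aa β (n+1+(m+1)) := Finset.prod_range_succ _ _
    have e2 : n+1+(m+1) = (n+1+m)+1 := by omega
    rw [e, e2]
    have h2 := hrec (n+1+m)
    have h3 := ih n
    calc π (n+1+m+1) * (hh β m n * aa β (n+1+m+1))
        = (π ((n+1+m)+1) * aa β ((n+1+m)+1)) * hh β m n := by ring
      _ = (α * π (n+1+m)) * hh β m n := by rw [h2]
      _ = α * (π (n+1+m) * hh β m n) := by ring
      _ = α * (π n * α^(m+1)) := by rw [h3]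
      _ = π n * α^(m+1+1) := by ring

private lemma vv_conv {α β : ℝ} {π : ℕ → ℝ} (hα : 0 < α) (hβ : 0 < β) (hpos : ∀ n, 0 < π n)
    (hrec : ∀ n, π (n+1) * aa β (n+1) = α * π n) (hsum : Summable π) (hπ1 : ∑' n, π n = 1)
    (n : ℕ) : 2 * vv α π (n+1) ≤ vv α π n + vv α π (n+2) := by
  have htail : ∀ j : ℕ, vv α π j = ∑' m : ℕ, π (m + (j+1)) * (1/(α * π j)) := by
    intro j
    have h1 := Summable.sum_add_tsum_nat_add (f := π) (j+1) hsum
    rw [hπ1] at h1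
    rw [tsum_mul_right]
    have h2 : ∑' i : ℕ, π (i + (j+1)) = 1 - ∑ m ∈ Finset.range (j+1), π m := by linarith
    rw [h2]
    unfold vv
    rw [div_eq_mul_one_div]
  have hsummand : ∀ j m : ℕ, π (m + (j+1)) * (1/(α * π j)) = α^m / hh β m j := by
    intro j m
    have h1 := pi_hh hrec m j
    rw [show m + (j+1) = j+1+m by omega]
    have h2 : hh β m j ≠ 0 := (hh_pos hβ m j).ne'
    have h3 : π j ≠ 0 := (hpos j).ne'
    have h4 : α ≠ 0 := hα.ne'
    field_simp
    linear_combination h1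
  have hsummable : ∀ j : ℕ, Summable (fun m => π (m + (j+1)) * (1/(α * π j))) :=
    fun j => ((summable_nat_add_iff (j+1)).2 hsum).mul_right _
  rw [htail n, htail (n+1), htail (n+2)]
  rw [← Summable.tsum_add (hsummable n) (hsummable (n+2)), ← tsum_mul_left]
  apply Summable.tsum_le_tsum _ ((hsummable (n+1)).mul_left 2) ((hsummable n).add (hsummable (n+2)))
  intro m
  rw [hsummand n m, hsummand (n+1) m, hsummand (n+2) m]
  have key := inv_conv (hh_pos hβ m n) (hh_pos hβ m (n+1)) (hh_pos hβ m (n+2)) (hh_logconc hβ m n)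
  have hpow : (0:ℝ) ≤ α^m := (pow_pos hα m).le
  calc 2 * (α^m / hh β m (n+1)) = α^m * (2 / hh β m (n+1)) := by ring
    _ ≤ α^m * (1 / hh β m n + 1 / hh β m (n+2)) := mul_le_mul_of_nonneg_left key hpow
    _ = α^m / hh β m n + α^m / hh β m (n+2) := by ring


/-- sign of the second difference of the Stein solution `g_k` for the indicator of `{k}`. -/
theorem stmt_18
    (α β : ℝ) (hα : 0 < α) (hβ : 0 < β)
    (C : ℝ) (hC : 0 < C) (π : ℕ → ℝ)
    (hπ : ∀ n : ℕ, π n =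
      C * α ^ n / ∏ i ∈ Finset.range n, (β * ((i : ℝ) + 1) + ((i : ℝ) + 1) * (i : ℝ)))
    (hπ1 : ∑' n, π n = 1)
    (k : ℕ) (gk : ℕ → ℝ) (hgk0 : gk 0 = gk 1)
    (hgk : ∀ n : ℕ, α * gk (n + 1) - (β * (n : ℝ) + (n : ℝ) * ((n : ℝ) - 1)) * gk n
      = (if n = k then (1 : ℝ) else 0) - ∑' m : ℕ, (if m = k then (1 : ℝ) else 0) * π m)
    :
    ∀ i : ℕ, 1 ≤ i →
      ((k ≤ i - 1 ∨ k = i + 1) → 0 ≤ gk (i + 2) - 2 * gk (i + 1) + gk i) ∧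
      (i + 2 ≤ k → gk (i + 2) - 2 * gk (i + 1) + gk i ≤ 0) := by
  have hfac : ∀ i : ℕ, (0:ℝ) < β * ((i:ℝ)+1) + ((i:ℝ)+1)*(i:ℝ) := by
    intro i; have h : (0:ℝ) ≤ i := Nat.cast_nonneg i; nlinarith
  have hπpos : ∀ n, 0 < π n := by
    intro n; rw [hπ n]
    exact div_pos (mul_pos hC (pow_pos hα n)) (Finset.prod_pos fun i _ => hfac i)
  have hrec : ∀ n, π (n+1) * aa β (n+1) = α * π n := by
    intro n
    have haeq : aa β (n+1) = β*((n:ℝ)+1) + ((n:ℝ)+1)*(n:ℝ) := by unfold aa; push_cast; ring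
    rw [hπ n, hπ (n+1), Finset.prod_range_succ, haeq]
    have h1 : (∏ i ∈ Finset.range n, (β*((i:ℝ)+1) + ((i:ℝ)+1)*(i:ℝ))) ≠ 0 :=
      (Finset.prod_pos fun i _ => hfac i).ne'
    have h2 : (β*((n:ℝ)+1) + ((n:ℝ)+1)*(n:ℝ)) ≠ 0 := (hfac n).ne'
    field_simp
    ring
  have hsum : Summable π := by
    by_contra h
    rw [tsum_eq_zero_of_not_summable h] at hπ1
    norm_num at hπ1
  have hπf : (∑' m : ℕ, (if m = k then (1:ℝ) else 0) * π m) = π k := by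
    rw [tsum_eq_single k]
    · simp
    · intro m hm; simp [hm]
  have gprod : ∀ m : ℕ, α * π m * gk (m+1)
      = π k * ((if k ≤ m then (1:ℝ) else 0) - ∑ j ∈ Finset.range (m+1), π j) := by
    intro m
    induction m with
    | zero =>
      have h0 := hgk 0
      rw [hπf] at h0
      norm_num at h0
      -- h0 : α * gk 1 = (if 0 = k then 1 else 0) - π k   (hopefully)
      simp only [zero_add, Finset.sum_range_one]
      have key0 : (if 0 = k then (1:ℝ) else 0) * π 0 = π k * (if k ≤ 0 then (1:ℝ) else 0) := by
        by_cases hk : k = 0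
        · subst hk; simp
        · rw [if_neg (Ne.symm hk), if_neg (by omega)]; ring
      linear_combination π 0 * h0 + key0
    | succ m ih =>
      have h := hgk (m+1)
      rw [hπf] at h
      have h' : α * gk (m+1+1) - aa β (m+1) * gk (m+1)
          = (if m+1 = k then (1:ℝ) else 0) - π k := h
      have key : π k * (if k ≤ m then (1:ℝ) else 0) + (if m+1 = k then (1:ℝ) else 0) * π (m+1)
          = π k * (if k ≤ m+1 then (1:ℝ) else 0) := by
        rcases lt_trichotomy k (m+1) with hlt | heq | hgt
        · rw [if_pos (by omega : k ≤ m), if_neg (by omega : ¬(m+1 = k)),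
            if_pos (by omega : k ≤ m+1)]; ring
        · rw [if_neg (by omega : ¬(k ≤ m)), if_pos (by omega : m+1 = k),
            if_pos (by omega : k ≤ m+1), heq]; ring
        · rw [if_neg (by omega : ¬(k ≤ m)), if_neg (by omega : ¬(m+1 = k)),
            if_neg (by omega : ¬(k ≤ m+1))]; ring
      have hs : ∑ j ∈ Finset.range (m+2), π j = ∑ j ∈ Finset.range (m+1), π j + π (m+1) :=
        Finset.sum_range_succ _ _
      linear_combination π (m+1) * h' + gk (m+1) * hrec m + ih + key + π k * hs
  have gneg : ∀ m : ℕ, ¬(k ≤ m) → gk (m+1) = -(π k / α) * SS π m := by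
    intro m hkm
    have h := gprod m
    rw [if_neg hkm] at h
    have h1 : π m ≠ 0 := (hπpos m).ne'
    have h3 : α ≠ 0 := hα.ne'
    unfold SS
    field_simp
    linear_combination h
  have gpos' : ∀ m : ℕ, k ≤ m → gk (m+1) = π k * vv α π m := by
    intro m hkm
    have h := gprod m
    rw [if_pos hkm] at h
    have h1 : π m ≠ 0 := (hπpos m).ne'
    have h3 : α ≠ 0 := hα.ne'
    unfold vv
    field_simp
    linear_combination h
  have vv_nonneg : ∀ m : ℕ, 0 ≤ vv α π m := by
    intro m
    unfold vv
    apply div_nonneg _ (mul_pos hα (hπpos m)).le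
    have hle : ∑ j ∈ Finset.range (m+1), π j ≤ 1 := by
      rw [← hπ1]; exact Summable.sum_le_tsum _ (fun i _ => (hπpos i).le) hsum
    linarith
  intro i hi
  obtain ⟨j, rfl⟩ : ∃ j, i = j + 1 := ⟨i - 1, by omega⟩
  constructor
  · rintro (hk | hk)
    · have hk' : k ≤ j := by omega
      have e0 : gk (j+1) = π k * vv α π j := gpos' j hk'
      have e1 : gk (j+1+1) = π k * vv α π (j+1) := gpos' (j+1) (by omega)
      have e2 : gk (j+1+2) = π k * vv α π (j+2) := gpos' (j+2) (by omega)
      rw [e0, e1, e2]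
      have hV := vv_conv hα hβ hπpos hrec hsum hπ1 j
      nlinarith [mul_nonneg (hπpos k).le
        (by linarith : (0:ℝ) ≤ vv α π j + vv α π (j+2) - 2 * vv α π (j+1))]
    · have e2 : gk (j+1+2) = π k * vv α π (j+2) := gpos' (j+2) (by omega)
      have e1 : gk (j+1+1) = -(π k / α) * SS π (j+1) := gneg (j+1) (by omega)
      have e0 : gk (j+1) = -(π k / α) * SS π j := gneg j (by omega)
      rw [e0, e1, e2]
      have h1 := SS_mono hα hβ hπpos hrec j
      have h2 := SS_nonneg hπpos j
      have h3 := vv_nonneg (j+2)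
      have h4 : 0 ≤ π k / α := div_nonneg (hπpos k).le hα.le
      nlinarith [mul_nonneg (hπpos k).le h3,
        mul_nonneg h4 (by linarith : (0:ℝ) ≤ 2 * SS π (j+1) - SS π j)]
  · intro hk
    have e0 : gk (j+1) = -(π k / α) * SS π j := gneg j (by omega)
    have e1 : gk (j+1+1) = -(π k / α) * SS π (j+1) := gneg (j+1) (by omega)
    have e2 : gk (j+1+2) = -(π k / α) * SS π (j+2) := gneg (j+2) (by omega)
    rw [e0, e1, e2]
    have hS := SS_conv hα hβ hπpos hrec j
    have h4 : 0 ≤ π k / α := div_nonneg (hπpos k).le hα.le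
    nlinarith [mul_nonneg h4
      (by linarith : (0:ℝ) ≤ SS π j + SS π (j+2) - 2 * SS π (j+1))]
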